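/- arXiv:1008.4167 — 3 statements merged into one kernel-verified Lean document; each statement's English description precedes it below -/
import Mathlib

section
/- For every n ≥ 2, every permutation π of {1,…,n}, and every real β > 1: π ∈ Al(Σ_β) if and only if β > B(π). In particular, if B(π) > 1 then π is not an allowed pattern of Σ_{B(π)}, so the infimum defining B(π) is never attained and B(π) is the maximum β such that π is a forbidden pattern of Σ_β. -/
/-- The shift map iterated `k` times: `(shift k w) i = w (i + k)`,
so `shift k w = w_k w_{k+1} w_{k+2} …`. -/
def shift (k : ℕ) (w : ℕ → ℕ) : ℕ → ℕ := fun i => w (i + k)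

/-- Strict lexicographic order on infinite words: `v < w` iff there is an index `i`
with `v j = w j` for all `j < i` and `v i < w i`. -/
def LexLt (v w : ℕ → ℕ) : Prop := ∃ i, (∀ j < i, v j = w j) ∧ v i < w i

/-- Weak lexicographic order: `v ≤ w` iff `v < w` or `v = w`. -/
def LexLe (v w : ℕ → ℕ) : Prop := LexLt v w ∨ v = w

/-- A word is a bounded sequence of natural numbers. -/
def IsWord (w : ℕ → ℕ) : Prop := ∃ M, ∀ i, w i ≤ M

/-- `fword w β = ∑_{i ≥ 0} w_i β^{-(i+1)} = w_0/β + w_1/β² + …`. -/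
noncomputable def fword (w : ℕ → ℕ) (β : ℝ) : ℝ := ∑' i : ℕ, (w i : ℝ) / β ^ (i + 1)

open Classical in
/-- `B̂(w)`: zero for the zero word, and otherwise `inf {β > 1 : f_w(β) ≤ 1}`. -/
noncomputable def Bhat (w : ℕ → ℕ) : ℝ :=
  if w = fun _ => 0 then 0 else sInf {β : ℝ | 1 < β ∧ fword w β ≤ 1}

/-- `B̄(w) = sup_{j ≥ 0} B̂(σ^j w)`. -/
noncomputable def Bbar (w : ℕ → ℕ) : ℝ := ⨆ j : ℕ, Bhat (shift j w)

/-- The sequence `A_i` in the β-expansion of `β`: `A_0 = β`, `A_{i+1} = β (A_i - ⌊A_i⌋)`. -/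
noncomputable def betaA (β : ℝ) : ℕ → ℝ
  | 0 => β
  | i + 1 => β * (betaA β i - (⌊betaA β i⌋₊ : ℝ))

/-- The β-expansion of `β`: the word `a` with `a_i = ⌊A_i⌋`. -/
noncomputable def betaExp (β : ℝ) : ℕ → ℕ := fun i => ⌊betaA β i⌋₊

/-- The domain `W(β)` of the β-shift: all words `w` with `σ^k w < a` lexicographically
for every `k ≥ 0`, where `a` is the β-expansion of `β`. -/
def Wset (β : ℝ) : Set (ℕ → ℕ) :=
  {w | IsWord w ∧ ∀ k : ℕ, LexLt (shift k w) (betaExp β)}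

/-- `π` is a permutation of `{1, …, n}` (viewed as a map `ℕ → ℕ`). -/
def IsPerm (n : ℕ) (π : ℕ → ℕ) : Prop := Set.BijOn π (Set.Icc 1 n) (Set.Icc 1 n)

/-- The word `w` induces the permutation `π` of `{1, …, n}`: for all `1 ≤ i, j ≤ n`,
`π(i) < π(j)` iff `σ^{i-1} w < σ^{j-1} w` lexicographically. -/
def Induces (n : ℕ) (w : ℕ → ℕ) (π : ℕ → ℕ) : Prop :=
  ∀ i ∈ Set.Icc 1 n, ∀ j ∈ Set.Icc 1 n,
    (π i < π j ↔ LexLt (shift (i - 1) w) (shift (j - 1) w))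

/-- `π ∈ Al(Σ_β)`: some word in `W(β)` induces `π`. -/
def Allowed (β : ℝ) (n : ℕ) (π : ℕ → ℕ) : Prop := ∃ w ∈ Wset β, Induces n w π

/-- The shift-complexity `B(π) = inf {β > 1 : π ∈ Al(Σ_β)}`. -/
noncomputable def Bperm (n : ℕ) (π : ℕ → ℕ) : ℝ :=
  sInf {β : ℝ | 1 < β ∧ Allowed β n π}

/-- `ρ_m` is the permutation `1 m 2 (m-1) 3 (m-2) …` of `{1, …, m}`:
`ρ(2i-1) = i` and `ρ(2i) = m+1-i`. -/
def IsRho (m : ℕ) (ρ : ℕ → ℕ) : Prop :=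
  IsPerm m ρ ∧ (∀ i, 1 ≤ i → 2 * i - 1 ≤ m → ρ (2 * i - 1) = i) ∧
    (∀ i, 1 ≤ i → 2 * i ≤ m → ρ (2 * i) = m + 1 - i)

-- chunk A: lex lemmas, betaA basics, monotonicity
lemma lexLt_irrefl (v : ℕ → ℕ) : ¬ LexLt v v := by
  rintro ⟨i, -, h⟩; exact lt_irrefl _ h

lemma lexLt_asymm {u v : ℕ → ℕ} (h1 : LexLt u v) (h2 : LexLt v u) : False := by
  obtain ⟨i, hi, hlt⟩ := h1
  obtain ⟨j, hj, hlt'⟩ := h2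
  rcases lt_trichotomy i j with h | rfl | h
  · exact absurd (hj i h).symm (ne_of_lt hlt)
  · exact lt_asymm hlt hlt'
  · exact absurd (hi j h) (ne_of_lt hlt').symm

lemma lexLt_trans {u v w : ℕ → ℕ} (h1 : LexLt u v) (h2 : LexLt v w) : LexLt u w := by
  obtain ⟨i, hi, hlt⟩ := h1
  obtain ⟨j, hj, hlt'⟩ := h2
  rcases lt_trichotomy i j with h | rfl | h
  · exact ⟨i, fun k hk => (hi k hk).trans (hj k (hk.trans h)),
      by rw [← hj i h]; exact hlt⟩
  · exact ⟨i, fun k hk => (hi k hk).trans (hj k hk), hlt.trans hlt'⟩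
  · exact ⟨j, fun k hk => (hi k (hk.trans h)).trans (hj k hk),
      by rw [hi j h]; exact hlt'⟩

lemma lex_trichotomy (u v : ℕ → ℕ) : LexLt u v ∨ u = v ∨ LexLt v u := by
  by_cases h : u = v
  · exact Or.inr (Or.inl h)
  · have hne : ∃ i, u i ≠ v i := by
      by_contra hc; push_neg at hc; exact h (funext hc)
    classical
    have hi : u (Nat.find hne) ≠ v (Nat.find hne) := Nat.find_spec hne
    have hmin : ∀ j < Nat.find hne, u j = v j := fun j hj => by
      by_contra hc; exact Nat.find_min hne hj hc
    rcases lt_or_gt_of_ne hi with h' | h'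
    · exact Or.inl ⟨_, hmin, h'⟩
    · exact Or.inr (Or.inr ⟨_, fun j hj => (hmin j hj).symm, h'⟩)

lemma betaA_nonneg {β : ℝ} (hβ : 0 < β) : ∀ i, 0 ≤ betaA β i := by
  intro i; induction i with
  | zero => exact hβ.le
  | succ i ih =>
    show 0 ≤ β * (betaA β i - (⌊betaA β i⌋₊ : ℝ))
    have := Nat.floor_le ih
    nlinarith

lemma betaA_zero_propagate {β : ℝ} {i : ℕ} (h : betaA β i = 0) :
    ∀ j, i ≤ j → betaA β j = 0 := by
  intro j hj
  induction j with
  | zero => have : i = 0 := Nat.le_zero.mp hj; exact this ▸ h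
  | succ j ih =>
    rcases Nat.lt_or_ge i (j+1) with h' | h'
    · have hz : betaA β j = 0 := ih (by omega)
      show β * (betaA β j - (⌊betaA β j⌋₊ : ℝ)) = 0
      simp [hz]
    · have : i = j + 1 := by omega
      exact this ▸ h

lemma betaA_strictMonoAux {β1 β2 : ℝ} (h1 : 0 < β1) (hlt : β1 < β2) :
    ∀ i, (∀ j < i, betaExp β1 j = betaExp β2 j) → betaA β1 i < betaA β2 i := by
  intro i; induction i with
  | zero => intro _; exact hlt
  | succ i ih =>
    intro hdig
    have hA := ih (fun j hj => hdig j (hj.trans (Nat.lt_succ_self i)))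
    have hd : (⌊betaA β1 i⌋₊ : ℝ) = (⌊betaA β2 i⌋₊ : ℝ) := by
      have := hdig i (Nat.lt_succ_self i)
      simpa [betaExp] using congrArg (fun x : ℕ => (x : ℝ)) this
    show β1 * (betaA β1 i - (⌊betaA β1 i⌋₊ : ℝ)) < β2 * (betaA β2 i - (⌊betaA β2 i⌋₊ : ℝ))
    have hfl : (⌊betaA β1 i⌋₊ : ℝ) ≤ betaA β1 i := Nat.floor_le (betaA_nonneg h1 i)
    rw [hd] at hfl ⊢
    nlinarith

lemma betaExp_not_lt {β1 β2 : ℝ} (h1 : 0 < β1) (hlt : β1 < β2) :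
    ¬ LexLt (betaExp β2) (betaExp β1) := by
  rintro ⟨i, hagree, hltd⟩
  have hA := betaA_strictMonoAux h1 hlt i (fun j hj => (hagree j hj).symm)
  have : betaExp β1 i ≤ betaExp β2 i := Nat.floor_le_floor hA.le
  omega

lemma Wset_mono {β1 β2 : ℝ} (h1 : 1 < β1) (hle : β1 ≤ β2) : Wset β1 ⊆ Wset β2 := by
  rcases eq_or_lt_of_le hle with rfl | hlt
  · exact subset_rfl
  rintro w ⟨hw, hk⟩
  refine ⟨hw, fun k => ?_⟩
  rcases lex_trichotomy (betaExp β1) (betaExp β2) with h | h | h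
  · exact lexLt_trans (hk k) h
  · rw [← h]; exact hk k
  · exact absurd h (betaExp_not_lt (by linarith) hlt)
-- chunk B: allowed for large beta; truncation lemmas
lemma betaExp_zero_pos {β : ℝ} (hβ : 1 < β) : 1 ≤ betaExp β 0 := by
  have : betaA β 0 = β := rfl
  simp only [betaExp, this]
  exact Nat.le_floor (by exact_mod_cast hβ.le)

lemma allowed_large {n : ℕ} (hn : 2 ≤ n) {π : ℕ → ℕ} (hπ : IsPerm n π) {β : ℝ}
    (hβ : (n : ℝ) + 1 < β) : Allowed β n π := by
  classical
  set w : ℕ → ℕ := fun k => if k < n then π (k + 1) else 0 with hw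
  have hwle : ∀ k, w k ≤ n := by
    intro k
    simp only [hw]
    split
    · next h => exact (hπ.1 ⟨by omega, by omega⟩).2
    · exact Nat.zero_le n
  have ha0 : n + 1 ≤ betaExp β 0 := by
    have : betaA β 0 = β := rfl
    simp only [betaExp, this]
    exact Nat.le_floor (by push_cast; linarith)
  have hval : ∀ i ∈ Set.Icc 1 n, shift (i - 1) w 0 = π i := by
    rintro i ⟨hi1, hi2⟩
    show w (0 + (i - 1)) = π i
    simp only [hw, Nat.zero_add]
    rw [if_pos (by omega)]
    congr 1; omega
  refine ⟨w, ⟨⟨n, hwle⟩, fun k => ⟨0, fun j hj => absurd hj (Nat.not_lt_zero j), ?_⟩⟩, ?_⟩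
  · show w (0 + k) < betaExp β 0
    have := hwle (0 + k); omega
  · intro i hi j hj
    constructor
    · intro hij
      exact ⟨0, fun l hl => absurd hl (Nat.not_lt_zero l), by rw [hval i hi, hval j hj]; exact hij⟩
    · rintro ⟨e, hag, hlt⟩
      match e with
      | 0 =>
        rw [hval i hi, hval j hj] at hlt; exact hlt
      | e + 1 =>
        have h0 := hag 0 (Nat.succ_pos e)
        rw [hval i hi, hval j hj] at h0
        have hij : i = j := hπ.2.1 hi hj h0
        subst hij
        exact absurd ⟨e + 1, hag, hlt⟩ (lexLt_irrefl _)

def trunc (m : ℕ) (w : ℕ → ℕ) : ℕ → ℕ := fun i => if i < m then w i else 0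

lemma trunc_mem_Wset {β : ℝ} (hβ : 1 < β) {w : ℕ → ℕ} (hw : w ∈ Wset β) (m : ℕ) :
    trunc m w ∈ Wset β := by
  classical
  obtain ⟨⟨M, hM⟩, hsh⟩ := hw
  refine ⟨⟨M, fun i => ?_⟩, fun k => ?_⟩
  · show (if i < m then w i else 0) ≤ M
    split
    · exact hM i
    · exact Nat.zero_le M
  by_cases hk : m ≤ k
  · refine ⟨0, fun j hj => absurd hj (Nat.not_lt_zero j), ?_⟩
    show (if 0 + k < m then w (0 + k) else 0) < betaExp β 0
    rw [if_neg (by omega)]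
    exact betaExp_zero_pos hβ
  push_neg at hk
  obtain ⟨e, hag, hlt⟩ := hsh k
  by_cases hcase : k + e < m
  · refine ⟨e, fun j hj => ?_, ?_⟩
    · show (if j + k < m then w (j + k) else 0) = betaExp β j
      rw [if_pos (by omega)]
      exact hag j hj
    · show (if e + k < m then w (e + k) else 0) < betaExp β e
      rw [if_pos (by omega)]
      exact hlt
  · push_neg at hcase
    have hex : ∃ j, m - k ≤ j ∧ betaExp β j ≠ 0 := by
      refine ⟨e, by omega, ?_⟩
      have : w (e + k) < betaExp β e := hlt
      omega
    refine ⟨Nat.find hex, fun j hj => ?_, ?_⟩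
    · show (if j + k < m then w (j + k) else 0) = betaExp β j
      by_cases hjm : j + k < m
      · rw [if_pos hjm]
        exact hag j (by omega)
      · rw [if_neg hjm]
        have hz : betaExp β j = 0 := by
          by_contra hne
          exact Nat.find_min hex hj ⟨by omega, hne⟩
        omega
    · show (if Nat.find hex + k < m then w (Nat.find hex + k) else 0) < betaExp β (Nat.find hex)
      obtain ⟨h1, h2⟩ := Nat.find_spec hex
      rw [if_neg (by omega)]
      omega

lemma trunc_induces {n : ℕ} {w π : ℕ → ℕ} (hπ : IsPerm n π) (hInd : Induces n w π) :
    ∃ m0, ∀ m, m0 ≤ m → Induces n (trunc m w) π := by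
  classical
  have hwit : ∀ p : ℕ × ℕ, ∃ e, p.1 ∈ Set.Icc 1 n → p.2 ∈ Set.Icc 1 n → π p.1 < π p.2 →
      (∀ j < e, shift (p.1 - 1) w j = shift (p.2 - 1) w j) ∧
        shift (p.1 - 1) w e < shift (p.2 - 1) w e := by
    intro p
    by_cases h : p.1 ∈ Set.Icc 1 n ∧ p.2 ∈ Set.Icc 1 n ∧ π p.1 < π p.2
    · obtain ⟨e, he⟩ := (hInd p.1 h.1 p.2 h.2.1).mp h.2.2
      exact ⟨e, fun _ _ _ => he⟩
    · exact ⟨0, fun h1 h2 h3 => absurd ⟨h1, h2, h3⟩ h⟩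
  choose E hE using hwit
  set B := Finset.sup (Finset.range (n + 1) ×ˢ Finset.range (n + 1)) E with hB
  refine ⟨n + B + 1, fun m hm => ?_⟩
  have hfor : ∀ i ∈ Set.Icc 1 n, ∀ j ∈ Set.Icc 1 n, π i < π j →
      LexLt (shift (i - 1) (trunc m w)) (shift (j - 1) (trunc m w)) := by
    intro i hi j hj hij
    obtain ⟨hag, hlt⟩ := hE (i, j) hi hj hij
    have hEB : E (i, j) ≤ B := by
      apply Finset.le_sup
      simp only [Finset.mem_product, Finset.mem_range]
      exact ⟨by have := hi.2; omega, by have := hj.2; omega⟩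
    have hi2 := hi.2
    have hj2 := hj.2
    refine ⟨E (i, j), fun l hl => ?_, ?_⟩
    · show (if l + (i - 1) < m then w (l + (i - 1)) else 0)
        = (if l + (j - 1) < m then w (l + (j - 1)) else 0)
      rw [if_pos (by omega), if_pos (by omega)]
      exact hag l hl
    · show (if E (i, j) + (i - 1) < m then w (E (i, j) + (i - 1)) else 0)
        < (if E (i, j) + (j - 1) < m then w (E (i, j) + (j - 1)) else 0)
      rw [if_pos (by omega), if_pos (by omega)]
      exact hlt
  intro i hi j hj
  constructor
  · exact hfor i hi j hj
  · intro hlex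
    rcases lt_trichotomy (π i) (π j) with h | h | h
    · exact h
    · have hij : i = j := hπ.2.1 hi hj h
      subst hij
      exact absurd hlex (lexLt_irrefl _)
    · exact absurd (lexLt_asymm (hfor j hj i hi h) hlex) (fun x => x)
-- chunk C: eventual digit matching
open Filter Set in
lemma digits_eventually {β : ℝ} (hβ : 1 < β) (b : ℕ → ℕ) (B : ℕ → ℝ)
    (hB0 : B 0 = β) (hBrec : ∀ i, B (i + 1) = β * (B i - b i))
    (h3 : ∀ i, (b i : ℝ) < B i) (h4 : ∀ i, B i ≤ (b i : ℝ) + 1) :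
    ∀ L : ℕ, ∀ᶠ β' in nhdsWithin β (Set.Iio β), ∀ j < L, betaExp β' j = b j := by
  have hβ0 : (0 : ℝ) < β := by linarith
  have key : ∀ i : ℕ, ∀ ε > (0:ℝ), ∀ᶠ β' in nhdsWithin β (Set.Iio β),
      (∀ j < i, betaExp β' j = b j) ∧ B i - ε < betaA β' i ∧ betaA β' i < B i := by
    intro i
    induction i with
    | zero =>
      intro ε hε
      have hmem : Set.Ioo (β - ε) β ∈ nhdsWithin β (Set.Iio β) :=
        Ioo_mem_nhdsLT (by linarith)
      filter_upwards [hmem] with β' hβ'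
      refine ⟨fun j hj => absurd hj (Nat.not_lt_zero j), ?_, ?_⟩
      · show B 0 - ε < betaA β' 0
        rw [hB0]; exact hβ'.1
      · show betaA β' 0 < B 0
        rw [hB0]; exact hβ'.2
    | succ i ih =>
      intro ε' hε'
      set c : ℝ := B i - b i with hc
      have hcpos : 0 < c := by have := h3 i; simp only [hc]; linarith
      have hcle : c ≤ 1 := by have := h4 i; simp only [hc]; linarith
      set ε : ℝ := min c (ε' / (2 * β)) with hεdef
      have hεpos : 0 < ε := lt_min hcpos (by positivity)
      have hεc : ε ≤ c := min_le_left _ _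
      have hεe : ε ≤ ε' / (2 * β) := min_le_right _ _
      set δ : ℝ := min (ε' / 2) β with hδdef
      have hδpos : 0 < δ := lt_min (by linarith) hβ0
      have hδe : δ ≤ ε' / 2 := min_le_left _ _
      have hδβ : δ ≤ β := min_le_right _ _
      have hmem : Set.Ioo (β - δ) β ∈ nhdsWithin β (Set.Iio β) :=
        Ioo_mem_nhdsLT (by linarith)
      filter_upwards [ih ε hεpos, hmem] with β' hih hIoo
      obtain ⟨hdig, hlow, hhigh⟩ := hih
      have hbi : (b i : ℝ) ≥ 0 := Nat.cast_nonneg _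
      have hAgt : (b i : ℝ) < betaA β' i := by
        have : B i - ε ≥ (b i : ℝ) := by simp only [hc] at hεc ⊢; linarith
        linarith
      have hAlt : betaA β' i < (b i : ℝ) + 1 := lt_of_lt_of_le hhigh (h4 i)
      have hdigi : betaExp β' i = b i := by
        show ⌊betaA β' i⌋₊ = b i
        rw [Nat.floor_eq_iff (by linarith)]
        exact ⟨hAgt.le, by exact_mod_cast hAlt⟩
      have hfloor : (⌊betaA β' i⌋₊ : ℝ) = (b i : ℝ) := by
        have : ⌊betaA β' i⌋₊ = b i := hdigi
        exact_mod_cast this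
      have hArec : betaA β' (i + 1) = β' * (betaA β' i - (b i : ℝ)) := by
        show β' * (betaA β' i - (⌊betaA β' i⌋₊ : ℝ)) = _
        rw [hfloor]
      set x : ℝ := betaA β' i - b i with hx
      have hx0 : 0 < x := by simp only [hx]; linarith
      have hxc : x < c := by simp only [hx, hc]; linarith
      have hxlow : c - ε < x := by simp only [hx, hc]; linarith
      have hβ'1 : β - δ < β' := hIoo.1
      have hβ'2 : β' < β := hIoo.2
      have hβ'pos : 0 < β' := by linarith
      refine ⟨fun j hj => ?_, ?_, ?_⟩
      · rcases Nat.lt_succ_iff_lt_or_eq.mp hj with h | h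
        · exact hdig j h
        · rw [h]; exact hdigi
      · -- lower bound: B (i+1) - ε' < betaA β' (i+1)
        rw [hArec, hBrec i, ← hc]
        have hce : 0 ≤ c - ε := by linarith
        have hβδ : 0 ≤ β - δ := by linarith
        have h1 : (β - δ) * (c - ε) ≤ β' * (c - ε) :=
          mul_le_mul_of_nonneg_right hβ'1.le hce
        have h1' : β' * (c - ε) < β' * x := mul_lt_mul_of_pos_left hxlow hβ'pos
        have h2 : β * c - ε' ≤ (β - δ) * (c - ε) := by
          have hβε : β * ε ≤ ε' / 2 := by
            have heq : β * (ε' / (2 * β)) = ε' / 2 := by field_simp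
            have := mul_le_mul_of_nonneg_left hεe hβ0.le
            linarith
          have hδc : δ * c ≤ δ := by nlinarith
          have hδε : 0 ≤ δ * ε := by positivity
          have hexp : (β - δ) * (c - ε) = β * c - β * ε - δ * c + δ * ε := by ring
          linarith
        linarith
      · -- upper bound
        rw [hArec, hBrec i, ← hc]
        calc β' * x < β * x := mul_lt_mul_of_pos_right hβ'2 hx0
          _ < β * c := mul_lt_mul_of_pos_left hxc hβ0
  intro L
  filter_upwards [key L 1 one_pos] with β' h
  exact h.1
-- chunk D: openness
open Filter Set in
lemma key_open {β : ℝ} {n : ℕ} {π : ℕ → ℕ} (hπ : IsPerm n π) (hβ : 1 < β)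
    (hAl : Allowed β n π) : ∃ β', 1 < β' ∧ β' < β ∧ Allowed β' n π := by
  classical
  obtain ⟨w, hw, hInd⟩ := hAl
  obtain ⟨m0, hm0⟩ := trunc_induces hπ hInd
  set m : ℕ := m0 + 1 with hm
  set w' : ℕ → ℕ := trunc m w with hw'def
  have hw' : w' ∈ Wset β := trunc_mem_Wset hβ hw m
  have hInd' : Induces n w' π := hm0 m (by omega)
  have hwz : ∀ i, m ≤ i → w' i = 0 := fun i hi => by
    show (if i < m then w i else 0) = 0
    rw [if_neg (by omega)]
  have hβ0 : (0 : ℝ) < β := by linarith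
  obtain ⟨b, B, hB0, hBrec, h3, h4, h5⟩ :
      ∃ (b : ℕ → ℕ) (B : ℕ → ℝ), B 0 = β ∧ (∀ i, B (i + 1) = β * (B i - b i)) ∧
        (∀ i, (b i : ℝ) < B i) ∧ (∀ i, B i ≤ (b i : ℝ) + 1) ∧
        (∀ k, LexLt (shift k w') b) := by
    by_cases hzero : ∃ i, betaA β i = 0
    · -- "simple Parry" case: quasi-greedy periodic word
      set N := Nat.find hzero with hNdef
      have hAN : betaA β N = 0 := Nat.find_spec hzero
      have hN1 : 1 ≤ N := by
        rcases Nat.eq_zero_or_pos N with h | h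
        · exfalso
          rw [h] at hAN
          have h0 : betaA β 0 = β := rfl
          rw [h0] at hAN; linarith
        · exact h
      set T := N - 1 with hTdef
      have hTN : T + 1 = N := by omega
      have hAT : betaA β T = (⌊betaA β T⌋₊ : ℝ) := by
        have h1 : betaA β (T + 1) = β * (betaA β T - (⌊betaA β T⌋₊ : ℝ)) := rfl
        rw [hTN, hAN] at h1
        have h2 := (mul_eq_zero.mp h1.symm).resolve_left (by linarith)
        linarith
      have hATne : betaA β T ≠ 0 := Nat.find_min hzero (by omega)
      have haT1 : 1 ≤ betaExp β T := by
        by_contra hc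
        have : betaExp β T = 0 := by omega
        have h0 : (⌊betaA β T⌋₊ : ℝ) = 0 := by
          rw [show ⌊betaA β T⌋₊ = betaExp β T from rfl, this]; simp
        exact hATne (by rw [hAT, h0])
      have hAzero : ∀ j, N ≤ j → betaA β j = 0 := betaA_zero_propagate hAN
      have hazero : ∀ j, N ≤ j → betaExp β j = 0 := by
        intro j hj
        show ⌊betaA β j⌋₊ = 0
        rw [hAzero j hj]; simp
      have hrlt : ∀ r, r < T → (betaExp β r : ℝ) < betaA β r := by
        intro r hr
        have hle : (⌊betaA β r⌋₊ : ℝ) ≤ betaA β r := Nat.floor_le (betaA_nonneg hβ0 r)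
        rcases lt_or_eq_of_le hle with h | h
        · exact h
        · exfalso
          have h1 : betaA β (r + 1) = β * (betaA β r - (⌊betaA β r⌋₊ : ℝ)) := rfl
          rw [h, sub_self, mul_zero] at h1
          exact Nat.find_min hzero (by omega) h1
      refine ⟨fun i => if i % N = T then betaExp β T - 1 else betaExp β (i % N),
        fun i => betaA β (i % N), ?_, ?_, ?_, ?_, ?_⟩
      · show betaA β (0 % N) = β
        rw [Nat.zero_mod]; rfl
      · intro i
        have hrN : i % N < N := Nat.mod_lt _ (by omega)
        by_cases hr : i % N = T
        · have hdiv : i + 1 = N * (i / N + 1) := by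
            have := Nat.div_add_mod i N
            have h2 : i % N = N - 1 := by omega
            calc i + 1 = N * (i / N) + i % N + 1 := by omega
              _ = N * (i / N) + N := by omega
              _ = N * (i / N + 1) := by ring
          have h1 : (i + 1) % N = 0 := by rw [hdiv]; exact Nat.mul_mod_right _ _
          show betaA β ((i + 1) % N) = β * (betaA β (i % N) -
            ((if i % N = T then betaExp β T - 1 else betaExp β (i % N) : ℕ) : ℝ))
          rw [h1, if_pos hr, hr]
          have hcast : ((betaExp β T - 1 : ℕ) : ℝ) = (betaExp β T : ℝ) - 1 := by
            rw [Nat.cast_sub haT1, Nat.cast_one]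
          rw [hcast]
          have h0 : betaA β 0 = β := rfl
          rw [h0, hAT]
          show β = β * ((betaExp β T : ℝ) - ((betaExp β T : ℝ) - 1))
          ring
        · have hrT : i % N < T := by omega
          have hN2 : 2 ≤ N := by omega
          have h1 : (i + 1) % N = i % N + 1 := by
            rw [Nat.add_mod, Nat.mod_eq_of_lt (show 1 < N by omega)]
            exact Nat.mod_eq_of_lt (by omega)
          show betaA β ((i + 1) % N) = β * (betaA β (i % N) -
            ((if i % N = T then betaExp β T - 1 else betaExp β (i % N) : ℕ) : ℝ))
          rw [h1, if_neg hr]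
          rfl
      · intro i
        have hrN : i % N < N := Nat.mod_lt _ (by omega)
        show ((if i % N = T then betaExp β T - 1 else betaExp β (i % N) : ℕ) : ℝ)
          < betaA β (i % N)
        by_cases hr : i % N = T
        · rw [if_pos hr, hr]
          have hcast : ((betaExp β T - 1 : ℕ) : ℝ) = (betaExp β T : ℝ) - 1 := by
            rw [Nat.cast_sub haT1, Nat.cast_one]
          rw [hcast, hAT]
          show (⌊betaA β T⌋₊ : ℝ) - 1 < (⌊betaA β T⌋₊ : ℝ)
          linarith
        · rw [if_neg hr]
          exact hrlt _ (by omega)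
      · intro i
        have hrN : i % N < N := Nat.mod_lt _ (by omega)
        show betaA β (i % N)
          ≤ ((if i % N = T then betaExp β T - 1 else betaExp β (i % N) : ℕ) : ℝ) + 1
        by_cases hr : i % N = T
        · rw [if_pos hr, hr]
          have hcast : ((betaExp β T - 1 : ℕ) : ℝ) = (betaExp β T : ℝ) - 1 := by
            rw [Nat.cast_sub haT1, Nat.cast_one]
          rw [hcast, hAT]
          show (⌊betaA β T⌋₊ : ℝ) ≤ (⌊betaA β T⌋₊ : ℝ) - 1 + 1
          linarith
        · rw [if_neg hr]
          exact (Nat.lt_floor_add_one _).le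
      · -- all shifts of w' are lex-below the quasi-greedy word b
        intro k
        set b : ℕ → ℕ := fun i => if i % N = T then betaExp β T - 1 else betaExp β (i % N)
          with hbdef
        show LexLt (shift k w') b
        have hbq : ∀ q : ℕ, 1 ≤ b (q * N) := by
          intro q
          have hmod : (q * N) % N = 0 := Nat.mul_mod_left q N
          by_cases hT0 : T = 0
          · have hfb : (⌊betaA β T⌋₊ : ℝ) = β := by
              rw [← hAT, hT0]
              rfl
            have haT1' : 1 ≤ ⌊betaA β T⌋₊ := haT1
            have h2 : 2 ≤ ⌊betaA β T⌋₊ := by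
              by_contra hc
              have h1 : ⌊betaA β T⌋₊ = 1 := by omega
              rw [h1] at hfb
              norm_num at hfb
              linarith
            show 1 ≤ (if (q * N) % N = T then betaExp β T - 1 else betaExp β ((q * N) % N))
            rw [hmod, if_pos hT0.symm]
            have h2' : 2 ≤ betaExp β T := h2
            omega
          · show 1 ≤ (if (q * N) % N = T then betaExp β T - 1 else betaExp β ((q * N) % N))
            rw [hmod, if_neg (fun hc => hT0 hc.symm)]
            exact betaExp_zero_pos hβ
        have hvne : shift k w' ≠ b := by
          intro heq
          have h1 : shift k w' (m * N) = 0 := by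
            show w' (m * N + k) = 0
            exact hwz _ (by nlinarith [Nat.le_mul_of_pos_right m (show 0 < N by omega)])
          have h2 := hbq m
          rw [congrFun heq (m * N)] at h1
          omega
        rcases lex_trichotomy (shift k w') b with h | h | h
        · exact h
        · exact absurd h hvne
        · exfalso
          obtain ⟨d, hag, hlt⟩ := h
          set q := d / N with hqdef
          set r := d % N with hrdef
          set s := q * N with hsdef
          have hdqr : d = s + r := by
            rw [hsdef, hqdef, Nat.mul_comm]
            exact (Nat.div_add_mod d N).symm
          have hrN : r < N := Nat.mod_lt _ (by omega)
          obtain ⟨e, hag', hlt'⟩ := hw'.2 (k + s)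
          have hu : ∀ j, shift (k + s) w' j = shift k w' (s + j) := by
            intro j
            show w' (j + (k + s)) = w' ((s + j) + k)
            congr 1
            ring
          have hbmod : ∀ j, j < N → b (s + j) = b j := by
            intro j hj
            show (if (s + j) % N = T then _ else betaExp β ((s + j) % N))
              = (if j % N = T then _ else betaExp β (j % N))
            have : (s + j) % N = j % N := by
              rw [hsdef, Nat.mul_add_mod']
            rw [this]
          have hagr : ∀ j, j < r → shift (k + s) w' j = betaExp β j := by
            intro j hj
            rw [hu j]
            have h1 : shift k w' (s + j) = b (s + j) := (hag (s + j) (by omega)).symm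
            rw [h1, hbmod j (by omega)]
            have hjT : j % N = j := Nat.mod_eq_of_lt (by omega)
            show (if j % N = T then _ else betaExp β (j % N)) = betaExp β j
            rw [hjT, if_neg (by omega)]
          have hur : b d < shift (k + s) w' r := by
            rw [hu r, ← hdqr]
            exact hlt
          have hbd : b d = if r = T then betaExp β T - 1 else betaExp β r := by
            show (if d % N = T then _ else betaExp β (d % N)) = _
            rfl
          have heT : e ≤ T := by
            by_contra hc
            have : betaExp β e = 0 := hazero e (by omega)
            have := hlt'
            omega
          rcases lt_trichotomy e r with hc | hc | hc
          · have h1 := hagr e hc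
            have := hlt'
            omega
          · rw [hc] at hlt'
            by_cases hr : r = T
            · rw [hbd, if_pos hr] at hur
              rw [hr] at hlt' hur
              omega
            · rw [hbd, if_neg hr] at hur
              omega
          · have h1 : shift (k + s) w' r = betaExp β r := hag' r hc
            by_cases hr : r = T
            · omega
            · rw [hbd, if_neg hr] at hur
              omega
    · -- non-Parry case: use the expansion itself
      push_neg at hzero
      refine ⟨betaExp β, betaA β, rfl, fun i => rfl, ?_, fun i => (Nat.lt_floor_add_one _).le, hw'.2⟩
      intro i
      have hle : (⌊betaA β i⌋₊ : ℝ) ≤ betaA β i := Nat.floor_le (betaA_nonneg hβ0 i)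
      rcases lt_or_eq_of_le hle with h | h
      · exact h
      · exfalso
        apply hzero (i + 1)
        show β * (betaA β i - (⌊betaA β i⌋₊ : ℝ)) = 0
        rw [h, sub_self, mul_zero]
  -- choose witnesses and perturb β
  unfold LexLt at h5
  choose d hd1 hd2 using h5
  set L := Finset.sup (Finset.range m) d + 1 with hLdef
  have hev := digits_eventually hβ b B hB0 hBrec h3 h4 L
  have hev2 : ∀ᶠ β' in nhdsWithin β (Set.Iio β), β' ∈ Set.Ioo 1 β :=
    eventually_of_mem (Ioo_mem_nhdsLT hβ) (fun x hx => hx)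
  obtain ⟨β', hdig, hβ'Ioo⟩ := (hev.and hev2).exists
  refine ⟨β', hβ'Ioo.1, hβ'Ioo.2, w', ⟨hw'.1, fun k => ?_⟩, hInd'⟩
  by_cases hk : k < m
  · have hdL : d k ≤ Finset.sup (Finset.range m) d :=
      Finset.le_sup (Finset.mem_range.mpr hk)
    refine ⟨d k, fun j hj => ?_, ?_⟩
    · exact (hd1 k j hj).trans (hdig j (by omega)).symm
    · rw [hdig (d k) (by omega)]
      exact hd2 k
  · refine ⟨0, fun j hj => absurd hj (Nat.not_lt_zero j), ?_⟩
    show w' (0 + k) < betaExp β' 0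
    rw [hwz (0 + k) (by omega)]
    exact betaExp_zero_pos hβ'Ioo.1
/-- For every `n ≥ 2`, permutation `π` of `{1,…,n}`, and real `β > 1`:
`π ∈ Al(Σ_β)` iff `β > B(π)`. In particular, if `B(π) > 1` then `π ∉ Al(Σ_{B(π)})`,
so the infimum defining `B(π)` is never attained. -/
theorem stmt_2 (n : ℕ) (hn : 2 ≤ n) (π : ℕ → ℕ) (hπ : IsPerm n π) :
    (∀ β : ℝ, 1 < β → (Allowed β n π ↔ Bperm n π < β)) ∧
      (1 < Bperm n π → ¬ Allowed (Bperm n π) n π) := by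
  have hmono : ∀ β1 β2 : ℝ, 1 < β1 → β1 ≤ β2 → Allowed β1 n π → Allowed β2 n π := by
    rintro β1 β2 h1 hle ⟨w, hw, hi⟩
    exact ⟨w, Wset_mono h1 hle hw, hi⟩
  have hmem : ((n : ℝ) + 2) ∈ {β : ℝ | 1 < β ∧ Allowed β n π} := by
    have hcast : (2 : ℝ) ≤ (n : ℝ) := by exact_mod_cast hn
    refine ⟨by linarith, ?_⟩
    exact allowed_large hn hπ (by linarith)
  have hS : Set.Nonempty {β : ℝ | 1 < β ∧ Allowed β n π} := ⟨_, hmem⟩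
  have hbdd : BddBelow {β : ℝ | 1 < β ∧ Allowed β n π} := ⟨1, fun x hx => hx.1.le⟩
  have hpart1 : ∀ β : ℝ, 1 < β → (Allowed β n π ↔ Bperm n π < β) := by
    intro β hβ
    constructor
    · intro hAl
      obtain ⟨β', h1', h2', h3'⟩ := key_open hπ hβ hAl
      calc Bperm n π ≤ β' := csInf_le hbdd ⟨h1', h3'⟩
        _ < β := h2'
    · intro hlt
      obtain ⟨γ, hγS, hγlt⟩ := exists_lt_of_csInf_lt hS hlt
      exact hmono γ β hγS.1 hγlt.le hγS.2
  exact ⟨hpart1, fun h1 hAl => absurd ((hpart1 _ h1).mp hAl) (lt_irrefl _)⟩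
end

section
/- Let n ≥ 2 and let π be a permutation of {1,…,n} with c := π(n) ≠ 1; set k = π^{−1}(c−1) and ℓ = π^{−1}(n), and assume ℓ > k. Let z_1,…,z_{n−1} be nonnegative integers satisfying: for all 1 ≤ i, j ≤ n−1, if z_j ≤ z_i and π(j) > π(i), then π(j+1) > π(i+1) and z_j = z_i. Let w be the word z_1 z_2 … z_{n−1} z_k z_{k+1} … z_{ℓ−2} (z_{ℓ−1}+1) 0^∞. Then σ^s w < σ^{ℓ−1} w lexicographically for every s ≥ 0 with s ≠ ℓ−1. -/
/-- The index into `z` that feeds position `p` of the word `w` in `stmt_5`. -/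
def idxF (n k p : ℕ) : ℕ := if p < n - 1 then p + 1 else k + (p - (n - 1))

/-- With `c = π(n) ≠ 1`, `k = π⁻¹(c-1)`, `ℓ = π⁻¹(n)`, `ℓ > k`, and
`w = z_1 … z_{n-1} z_k z_{k+1} … z_{ℓ-2} (z_{ℓ-1}+1) 0^∞`, one has
`σ^s w < σ^{ℓ-1} w` lexicographically for every `s ≠ ℓ-1`. -/
theorem stmt_5 (n : ℕ) (hn : 2 ≤ n) (π : ℕ → ℕ) (hπ : IsPerm n π)
    (c k ℓ : ℕ) (hc : c = π n) (hc1 : c ≠ 1)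
    (hk : k ∈ Set.Icc 1 n) (hkc : π k = c - 1)
    (hℓ : ℓ ∈ Set.Icc 1 n) (hℓn : π ℓ = n) (hℓk : k < ℓ)
    (z : ℕ → ℕ)
    (hz : ∀ i ∈ Set.Icc 1 (n - 1), ∀ j ∈ Set.Icc 1 (n - 1),
      z j ≤ z i → π i < π j → π (i + 1) < π (j + 1) ∧ z j = z i)
    (w : ℕ → ℕ)
    (hw : ∀ i : ℕ, w i =
      if i < n - 1 then z (i + 1)
      else if i < n + ℓ - k - 2 then z (k + (i - (n - 1)))
      else if i = n + ℓ - k - 2 then z (ℓ - 1) + 1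
      else 0) :
    ∀ s : ℕ, s ≠ ℓ - 1 → LexLt (shift s w) (shift (ℓ - 1) w) := by
  obtain ⟨hk1, hkn⟩ := Set.mem_Icc.mp hk
  obtain ⟨hl1, hln⟩ := Set.mem_Icc.mp hℓ
  have hπle : ∀ x, 1 ≤ x → x ≤ n → 1 ≤ π x ∧ π x ≤ n := by
    intro x h1 h2
    exact Set.mem_Icc.mp (hπ.mapsTo (Set.mem_Icc.mpr ⟨h1, h2⟩))
  have hπinj' : ∀ x y, 1 ≤ x → x ≤ n → 1 ≤ y → y ≤ n → π x = π y → x = y := by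
    intro x y hx1 hx2 hy1 hy2 h
    exact hπ.injOn (Set.mem_Icc.mpr ⟨hx1, hx2⟩) (Set.mem_Icc.mpr ⟨hy1, hy2⟩) h
  have hcb := hπle n (by omega) (le_refl n)
  have hc2 : 2 ≤ c := by
    have : 1 ≤ c := by rw [hc]; exact hcb.1
    omega
  have hcn : c ≤ n := by rw [hc]; exact hcb.2
  -- reformulations of hz
  have hz' : ∀ a b, 1 ≤ a → a ≤ n - 1 → 1 ≤ b → b ≤ n - 1 → π a < π b →
      z a ≤ z b ∧ (z a = z b → π (a + 1) < π (b + 1)) := by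
    intro a b ha1 ha2 hb1 hb2 hab
    have hma : a ∈ Set.Icc 1 (n - 1) := Set.mem_Icc.mpr ⟨ha1, ha2⟩
    have hmb : b ∈ Set.Icc 1 (n - 1) := Set.mem_Icc.mpr ⟨hb1, hb2⟩
    constructor
    · rcases le_or_gt (z a) (z b) with h | h
      · exact h
      · have := (hz a hma b hmb (le_of_lt h) hab).2
        omega
    · intro he
      exact (hz a hma b hmb (le_of_eq he.symm) hab).1
  have hbump : ∀ b, 1 ≤ b → b ≤ n - 1 → π (ℓ - 1) < π b → z (ℓ - 1) < z b := by
    intro b hb1 hb2 h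
    by_contra hle
    push_neg at hle
    have h2 := (hz (ℓ - 1) (Set.mem_Icc.mpr ⟨by omega, by omega⟩) b
      (Set.mem_Icc.mpr ⟨hb1, hb2⟩) hle h).1
    rw [show ℓ - 1 + 1 = ℓ by omega, hℓn] at h2
    have := hπle (b + 1) (by omega) (by omega)
    omega
  -- values of w
  have hwA : ∀ p, p + 3 ≤ n + ℓ - k → w p = z (idxF n k p) := by
    intro p hp
    rw [hw p]
    simp only [idxF]
    split_ifs <;> first | rfl | (exfalso; omega)
  have hwB : w (n + ℓ - k - 2) = z (ℓ - 1) + 1 := by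
    rw [hw]
    split_ifs <;> first | rfl | (exfalso; omega)
  have hwC : ∀ p, n + ℓ - k - 1 ≤ p → w p = 0 := by
    intro p hp
    rw [hw p]
    split_ifs <;> first | rfl | (exfalso; omega)
  have hidx_mem : ∀ p, p + 2 ≤ n + ℓ - k → 1 ≤ idxF n k p ∧ idxF n k p ≤ n - 1 := by
    intro p hp
    simp only [idxF]
    split_ifs <;> omega
  have hidxB : idxF n k (n + ℓ - k - 2) = ℓ - 1 := by
    simp only [idxF]
    split_ifs <;> omega
  have hsucc : ∀ p, p ≠ n - 2 → idxF n k (p + 1) = idxF n k p + 1 := by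
    intro p h
    simp only [idxF]
    split_ifs <;> omega
  -- dead-stream comparison
  have dead : ∀ p q : ℕ, n + ℓ - k - 1 ≤ p → q + 2 ≤ n + ℓ - k →
      ∃ T, (∀ j < T, w (p + j) = w (q + j)) ∧ w (p + T) < w (q + T) := by
    intro p q hp hq
    have hex : ∃ j, w (q + j) ≠ 0 :=
      ⟨n + ℓ - k - 2 - q, by rw [show q + (n + ℓ - k - 2 - q) = n + ℓ - k - 2 by omega, hwB]; omega⟩
    refine ⟨Nat.find hex, fun j hj => ?_, ?_⟩
    · have h1 : w (q + j) = 0 := by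
        have := Nat.find_min hex hj
        simpa using this
      rw [hwC (p + j) (by omega), h1]
    · have h2 := Nat.find_spec hex
      rw [hwC (p + Nat.find hex) (by omega)]
      omega
  -- prepend one equal letter
  have prep : ∀ p q : ℕ, w p = w q →
      (∃ T, (∀ j < T, w (p + 1 + j) = w (q + 1 + j)) ∧ w (p + 1 + T) < w (q + 1 + T)) →
      ∃ T, (∀ j < T, w (p + j) = w (q + j)) ∧ w (p + T) < w (q + T) := by
    rintro p q h0 ⟨T, hT1, hT2⟩
    refine ⟨T + 1, ?_, ?_⟩
    · intro j hj
      cases j with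
      | zero => simpa using h0
      | succ j =>
        have := hT1 j (by omega)
        rw [show p + (j + 1) = p + 1 + j by omega, show q + (j + 1) = q + 1 + j by omega]
        exact this
    · rw [show p + (T + 1) = p + 1 + T by omega, show q + (T + 1) = q + 1 + T by omega]
      exact hT2
  -- the key induction
  have key : ∀ r p q : ℕ, q + r + 2 = n + ℓ - k → p ≠ q → p + 2 ≤ n + ℓ - k →
      (π (idxF n k p) < π (idxF n k q) ∨ (idxF n k p = idxF n k q ∧ p < q)) →
      ∃ T, (∀ j < T, w (p + j) = w (q + j)) ∧ w (p + T) < w (q + T) := by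
    intro r
    induction r with
    | zero =>
      intro p q hq hpq hpN hinv
      have hqv : q = n + ℓ - k - 2 := by omega
      subst hqv
      rw [hidxB] at hinv
      rcases hinv with hlt | ⟨heq, hpq'⟩
      · have hpN2 : p + 3 ≤ n + ℓ - k := by
          rcases (by omega : p + 3 ≤ n + ℓ - k ∨ p = n + ℓ - k - 2) with h | h
          · exact h
          · exfalso
            rw [h, hidxB] at hlt
            exact lt_irrefl _ hlt
        have h1 := hidx_mem p (by omega)
        have h2 : z (idxF n k p) ≤ z (ℓ - 1) :=
          (hz' _ _ h1.1 h1.2 (by omega) (by omega) hlt).1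
        refine ⟨0, fun j hj => absurd hj (Nat.not_lt_zero j), ?_⟩
        simp only [Nat.add_zero]
        rw [hwA p hpN2, hwB]
        omega
      · have hshape : p < n - 1 := by
          by_contra h
          simp only [idxF, if_neg h] at heq
          omega
        refine ⟨0, fun j hj => absurd hj (Nat.not_lt_zero j), ?_⟩
        simp only [Nat.add_zero]
        rw [hwA p (by omega), heq, hwB]
        omega
    | succ r ih =>
      intro p q hq hpq hpN hinv
      have hwq : w q = z (idxF n k q) := hwA q (by omega)
      have hqmem := hidx_mem q (by omega)
      rcases hinv with hlt | ⟨heq, hpq'⟩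
      · by_cases hpe : p + 3 ≤ n + ℓ - k
        · -- both streams normal
          have hpmem := hidx_mem p (by omega)
          have hwp : w p = z (idxF n k p) := hwA p hpe
          have hle := (hz' _ _ hpmem.1 hpmem.2 hqmem.1 hqmem.2 hlt).1
          rcases lt_or_eq_of_le hle with hzlt | hzeq
          · refine ⟨0, fun j hj => absurd hj (Nat.not_lt_zero j), ?_⟩
            simp only [Nat.add_zero]
            rw [hwp, hwq]
            omega
          · have hstep := (hz' _ _ hpmem.1 hpmem.2 hqmem.1 hqmem.2 hlt).2 hzeq
            have hinv' : π (idxF n k (p + 1)) < π (idxF n k (q + 1)) ∨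
                (idxF n k (p + 1) = idxF n k (q + 1) ∧ p + 1 < q + 1) := by
              by_cases hp2 : p = n - 2
              · have hq2 : q ≠ n - 2 := by omega
                have e1 : idxF n k p = n - 1 := by
                  simp only [idxF, if_pos (show p < n - 1 by omega)]
                  omega
                have e2 : idxF n k (p + 1) = k := by
                  simp only [idxF, if_neg (show ¬ p + 1 < n - 1 by omega)]
                  omega
                rw [e1] at hstep
                rw [show n - 1 + 1 = n by omega, ← hc] at hstep
                left
                rw [e2, hkc, hsucc q hq2]
                omega
              · by_cases hq2 : q = n - 2
                · have e1 : idxF n k q = n - 1 := by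
                    simp only [idxF, if_pos (show q < n - 1 by omega)]
                    omega
                  have e2 : idxF n k (q + 1) = k := by
                    simp only [idxF, if_neg (show ¬ q + 1 < n - 1 by omega)]
                    omega
                  rw [e1] at hstep
                  rw [show n - 1 + 1 = n by omega, ← hc] at hstep
                  rw [hsucc p hp2, e2]
                  rcases (by omega : π (idxF n k p + 1) < c - 1 ∨ π (idxF n k p + 1) = c - 1)
                    with h | h
                  · left
                    rw [hkc]
                    omega
                  · right
                    have hik : idxF n k p + 1 = k :=
                      hπinj' _ _ (by omega) (by omega) hk1 hkn (h.trans hkc.symm)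
                    refine ⟨hik, ?_⟩
                    have hpre : p < n - 1 := by
                      by_contra hcn'
                      have : k ≤ idxF n k p := by
                        simp only [idxF, if_neg hcn']
                        omega
                      omega
                    omega
                · rw [hsucc p hp2, hsucc q hq2]
                  left
                  exact hstep
            exact prep p q (by rw [hwp, hwq, hzeq])
              (ih (p + 1) (q + 1) (by omega) (by omega) (by omega) hinv')
        · -- A-stream at its bump
          have hpv : p = n + ℓ - k - 2 := by omega
          rw [hpv, hidxB] at hlt
          have hblt : z (ℓ - 1) < z (idxF n k q) := hbump _ hqmem.1 hqmem.2 hlt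
          rcases (by omega : z (ℓ - 1) + 1 < z (idxF n k q) ∨ z (ℓ - 1) + 1 = z (idxF n k q))
            with h | h
          · refine ⟨0, fun j hj => absurd hj (Nat.not_lt_zero j), ?_⟩
            simp only [Nat.add_zero]
            rw [hpv, hwB, hwq]
            omega
          · exact prep p q (by rw [hpv, hwB, hwq]; omega)
              (dead (p + 1) (q + 1) (by omega) (by omega))
      · -- sync state
        have hpq2 : p < n - 1 ∧ ¬ q < n - 1 ∧ p ≠ n - 2 := by
          simp only [idxF] at heq
          split_ifs at heq <;> omega
        obtain ⟨hs1, hs2, hs3⟩ := hpq2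
        have hwp : w p = z (idxF n k p) := hwA p (by omega)
        have hinv' : π (idxF n k (p + 1)) < π (idxF n k (q + 1)) ∨
            (idxF n k (p + 1) = idxF n k (q + 1) ∧ p + 1 < q + 1) :=
          Or.inr ⟨by rw [hsucc p hs3, hsucc q (by omega), heq], by omega⟩
        exact prep p q (by rw [hwp, hwq, heq])
          (ih (p + 1) (q + 1) (by omega) (by omega) (by omega) hinv')
  -- assemble
  intro s hs
  by_cases hsN : n + ℓ - k - 1 ≤ s
  · obtain ⟨T, h1, h2⟩ := dead s (ℓ - 1) hsN (by omega)
    refine ⟨T, fun j hj => ?_, ?_⟩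
    · simp only [shift]
      rw [Nat.add_comm j s, Nat.add_comm j (ℓ - 1)]
      exact h1 j hj
    · simp only [shift]
      rw [Nat.add_comm T s, Nat.add_comm T (ℓ - 1)]
      exact h2
  · have hsmem := hidx_mem s (by omega)
    have h2 : idxF n k s ≠ ℓ := by
      simp only [idxF]
      split_ifs <;> omega
    have h3 : π (idxF n k s) ≠ n := by
      intro hE
      exact h2 (hπinj' _ _ (by omega) (by omega) hl1 hln (by rw [hℓn]; exact hE))
    have hsb := hπle (idxF n k s) (by omega) (by omega)
    have hinv : π (idxF n k s) < π (idxF n k (ℓ - 1)) ∨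
        (idxF n k s = idxF n k (ℓ - 1) ∧ s < ℓ - 1) := by
      by_cases hln2 : ℓ < n
      · have e : idxF n k (ℓ - 1) = ℓ := by
          simp only [idxF, if_pos (show ℓ - 1 < n - 1 by omega)]
          omega
        left
        rw [e, hℓn]
        omega
      · have hleq : ℓ = n := by omega
        have e : idxF n k (ℓ - 1) = k := by
          simp only [idxF, if_neg (show ¬ ℓ - 1 < n - 1 by omega)]
          omega
        have hcn2 : c = n := by rw [hc, ← hleq, hℓn]; omega
        have hπk : π k = n - 1 := by rw [hkc, hcn2]
        rcases (by omega : π (idxF n k s) < n - 1 ∨ π (idxF n k s) = n - 1) with h | h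
        · left
          rw [e, hπk]
          omega
        · right
          have hik : idxF n k s = k :=
            hπinj' _ _ (by omega) (by omega) hk1 hkn (by rw [hπk]; exact h)
          refine ⟨by rw [e]; exact hik, ?_⟩
          simp only [idxF] at hik
          split_ifs at hik <;> omega
    obtain ⟨T, h1, h2⟩ := key (n - k - 1) s (ℓ - 1) (by omega) hs (by omega) hinv
    refine ⟨T, fun j hj => ?_, ?_⟩
    · simp only [shift]
      rw [Nat.add_comm j s, Nat.add_comm j (ℓ - 1)]
      exact h1 j hj
    · simp only [shift]
      rw [Nat.add_comm T s, Nat.add_comm T (ℓ - 1)]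
      exact h2
end

section
/- Let n ≥ 2 and let π be a permutation of {1,…,n} with π(n) = 1, and set ℓ = π^{−1}(n). Let w be a word with w_i = 0 for all indices i ≥ n−1 (zero-based), and suppose w induces π. Then: (1) σ^s w < σ^{ℓ−1} w lexicographically for every s ≠ ℓ−1; (2) B̄(w) = B̂(σ^{ℓ−1} w); (3) every word v ≠ w that agrees with w in its first n−1 letters satisfies B̄(v) > B̄(w). -/
section Helpers

lemma summable_aux {x : ℕ → ℕ} {M : ℕ} (hM : ∀ i, x i ≤ M) {β : ℝ} (hβ : 1 < β) :
    Summable (fun i : ℕ => (x i : ℝ) / β ^ (i + 1)) := by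
  have hβ0 : (0:ℝ) < β := by linarith
  have hr0 : (0:ℝ) ≤ β⁻¹ := by positivity
  have hr1 : β⁻¹ < 1 := inv_lt_one_of_one_lt₀ hβ
  have hg : Summable (fun i : ℕ => (M : ℝ) * β⁻¹ * β⁻¹ ^ i) :=
    (summable_geometric_of_lt_one hr0 hr1).mul_left _
  apply Summable.of_nonneg_of_le (fun i => by positivity) _ hg
  intro i
  rw [div_eq_mul_inv, ← inv_pow]
  calc (x i : ℝ) * (β⁻¹) ^ (i+1) ≤ (M:ℝ) * (β⁻¹) ^ (i+1) :=
        mul_le_mul_of_nonneg_right (by exact_mod_cast hM i) (by positivity)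
    _ = (M:ℝ) * β⁻¹ * β⁻¹ ^ i := by ring

lemma fword_le_one_of_bound {x : ℕ → ℕ} {M : ℕ} (hM : ∀ i, x i ≤ M) :
    fword x ((M:ℝ) + 2) ≤ 1 := by
  have hM0 : (0:ℝ) ≤ (M:ℝ) := Nat.cast_nonneg M
  have hβ : (1:ℝ) < (M:ℝ) + 2 := by linarith
  set β : ℝ := (M:ℝ) + 2 with hβdef
  have hβ0 : (0:ℝ) < β := by linarith
  have hr0 : (0:ℝ) ≤ β⁻¹ := by positivity
  have hr1 : β⁻¹ < 1 := inv_lt_one_of_one_lt₀ hβ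
  have hsum := summable_aux hM hβ
  have hg : Summable (fun i : ℕ => (M : ℝ) * β⁻¹ ^ (i+1)) := by
    have : Summable (fun i : ℕ => (M : ℝ) * β⁻¹ * β⁻¹ ^ i) :=
      (summable_geometric_of_lt_one hr0 hr1).mul_left _
    refine this.congr fun i => by ring
  have h1 : fword x β ≤ ∑' i : ℕ, (M:ℝ) * β⁻¹ ^ (i+1) := by
    apply Summable.tsum_le_tsum _ hsum hg
    intro i
    rw [div_eq_mul_inv, ← inv_pow]
    exact mul_le_mul_of_nonneg_right (by exact_mod_cast hM i) (by positivity)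
  have h2 : ∑' i : ℕ, (M:ℝ) * β⁻¹ ^ (i+1) = (M:ℝ) * ((1-β⁻¹)⁻¹ * β⁻¹) := by
    rw [tsum_mul_left]
    congr 1
    calc ∑' i : ℕ, β⁻¹ ^ (i+1) = ∑' i : ℕ, β⁻¹ ^ i * β⁻¹ := by
          refine tsum_congr fun i => by ring
      _ = (1-β⁻¹)⁻¹ * β⁻¹ := by rw [tsum_mul_right, tsum_geometric_of_lt_one hr0 hr1]
  rw [h2] at h1
  refine h1.trans ?_
  have h1mpos : (0:ℝ) < 1 - β⁻¹ := by linarith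
  have hbm : (0:ℝ) < β - 1 := by linarith
  have h4 : (M:ℝ) * ((1-β⁻¹)⁻¹ * β⁻¹) = (M:ℝ)/(β-1) := by
    field_simp
  rw [h4, hβdef]
  rw [show (M:ℝ) + 2 - 1 = (M:ℝ) + 1 by ring]
  rw [div_le_one (by positivity)]
  linarith

lemma Bhat_le_of_bound {x : ℕ → ℕ} {M : ℕ} (hM : ∀ i, x i ≤ M) : Bhat x ≤ (M:ℝ) + 2 := by
  rw [Bhat]
  split_ifs
  · positivity
  · exact csInf_le ⟨1, fun b hb => hb.1.le⟩
      ⟨by have : (0:ℝ) ≤ (M:ℝ) := Nat.cast_nonneg M; linarith, fword_le_one_of_bound hM⟩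

lemma setA_nonempty {x : ℕ → ℕ} {M : ℕ} (hM : ∀ i, x i ≤ M) :
    {β : ℝ | 1 < β ∧ fword x β ≤ 1}.Nonempty :=
  ⟨(M:ℝ) + 2, by
    have : (0:ℝ) ≤ (M:ℝ) := Nat.cast_nonneg M
    exact ⟨by linarith, fword_le_one_of_bound hM⟩⟩

lemma fword_eq_sum {x : ℕ → ℕ} {N : ℕ} (h : ∀ i, N ≤ i → x i = 0) (β : ℝ) :
    fword x β = ∑ i ∈ Finset.range N, (x i : ℝ) / β ^ (i + 1) := by
  apply tsum_eq_sum
  intro i hi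
  rw [h i (by simpa using hi)]
  simp

lemma sum_anti (x : ℕ → ℕ) (N : ℕ) {β β' : ℝ} (h1 : 1 ≤ β) (h : β ≤ β') :
    ∑ i ∈ Finset.range N, (x i : ℝ) / β' ^ (i+1) ≤ ∑ i ∈ Finset.range N, (x i : ℝ) / β ^ (i+1) := by
  apply Finset.sum_le_sum
  intro i _
  gcongr

lemma continuousAt_sum_div (c : ℕ → ℕ) (N : ℕ) {x : ℝ} (hx : x ≠ 0) :
    ContinuousAt (fun b : ℝ => ∑ i ∈ Finset.range N, (c i : ℝ) / b ^ (i+1)) x :=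
  tendsto_finset_sum _ fun i _ =>
    (continuousAt_const.div (continuousAt_pow _ _) (pow_ne_zero _ hx))

end Helpers

/-- Let `π` be a permutation of `{1,…,n}` with `π(n) = 1`, `ℓ = π⁻¹(n)`, and
let `w` be a word with `w_i = 0` for all `i ≥ n-1` (zero-based) that induces `π`. Then:
(1) `σ^s w < σ^{ℓ-1} w` for every `s ≠ ℓ-1`; (2) `B̄(w) = B̂(σ^{ℓ-1} w)`;
(3) every word `v ≠ w` agreeing with `w` in its first `n-1` letters has `B̄(v) > B̄(w)`. -/


theorem stmt_7 (n : ℕ) (hn : 2 ≤ n) (π : ℕ → ℕ) (hπ : IsPerm n π)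
    (hπn : π n = 1) (ℓ : ℕ) (hℓ : ℓ ∈ Set.Icc 1 n) (hℓn : π ℓ = n)
    (w : ℕ → ℕ) (hw0 : ∀ i : ℕ, n - 1 ≤ i → w i = 0) (hwπ : Induces n w π) :
    (∀ s : ℕ, s ≠ ℓ - 1 → LexLt (shift s w) (shift (ℓ - 1) w)) ∧
      Bbar w = Bhat (shift (ℓ - 1) w) ∧
      (∀ v : ℕ → ℕ, IsWord v → v ≠ w → (∀ i < n - 1, v i = w i) → Bbar w < Bbar v) := by
  obtain ⟨hℓ1, hℓle⟩ := hℓ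
  have hℓmem : ℓ ∈ Set.Icc 1 n := ⟨hℓ1, hℓle⟩
  have hzero : ∀ s, n - 1 ≤ s → shift s w = shift (n-1) w := by
    intro s hs; funext i
    show w (i + s) = w (i + (n-1))
    rw [hw0 _ (by omega), hw0 _ (by omega)]
  have hnIcc : n ∈ Set.Icc 1 n := ⟨by omega, le_refl n⟩
  have hmaxn : LexLt (shift (n-1) w) (shift (ℓ-1) w) :=
    (hwπ n hnIcc ℓ hℓmem).mp (by rw [hπn, hℓn]; omega)
  have part1 : ∀ s, s ≠ ℓ - 1 → LexLt (shift s w) (shift (ℓ-1) w) := by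
    intro s hs
    by_cases hsn : s + 1 ≤ n - 1
    · have hmem : s + 1 ∈ Set.Icc 1 n := ⟨by omega, by omega⟩
      have hne : π (s+1) ≠ n := by
        intro h
        have : s + 1 = ℓ := hπ.injOn hmem hℓmem (by rw [h, hℓn])
        omega
      have hlt : π (s+1) < n := lt_of_le_of_ne (hπ.mapsTo hmem).2 hne
      have h := (hwπ (s+1) hmem ℓ hℓmem).mp (by rw [hℓn]; exact hlt)
      simpa using h
    · rw [hzero s (by omega)]; exact hmaxn
  refine ⟨part1, ?_⟩
  -- basic objects
  obtain ⟨k₀, hk₀a, hk₀lt⟩ := hmaxn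
  have hupos : 1 ≤ shift (ℓ-1) w k₀ := by omega
  have hune : shift (ℓ-1) w ≠ fun _ => 0 := by
    intro h
    have h2 := congrFun h k₀
    try simp only at h2
    omega
  set M : ℕ := (Finset.range n).sup w with hMdef
  have hMb : ∀ i, w i ≤ M := by
    intro i
    by_cases h : i < n
    · exact Finset.le_sup (Finset.mem_range.mpr h)
    · rw [hw0 i (by omega)]; exact Nat.zero_le _
  have hMsh : ∀ j i, shift j w i ≤ M := fun j i => hMb _
  have hsz : ∀ j i, n ≤ i → shift j w i = 0 := fun j i hi => hw0 _ (by omega)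
  have hfeq : ∀ j (β : ℝ), fword (shift j w) β
      = ∑ i ∈ Finset.range n, ((shift j w i : ℝ)) / β ^ (i+1) :=
    fun j β => fword_eq_sum (hsz j) β
  have hAne : {β : ℝ | 1 < β ∧ fword (shift (ℓ-1) w) β ≤ 1}.Nonempty := setA_nonempty (hMsh (ℓ-1))
  have hAbdd : BddBelow {β : ℝ | 1 < β ∧ fword (shift (ℓ-1) w) β ≤ 1} :=
    ⟨1, fun b hb => hb.1.le⟩
  set β₁ : ℝ := sInf {β : ℝ | 1 < β ∧ fword (shift (ℓ-1) w) β ≤ 1} with hβ₁def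
  have hBhatu : Bhat (shift (ℓ-1) w) = β₁ := by rw [Bhat, if_neg hune]
  have hβ₁ge1 : 1 ≤ β₁ := le_csInf hAne fun b hb => hb.1.le
  have hβ₁0 : (0:ℝ) < β₁ := by linarith
  have hfu_le : ∀ β : ℝ, β₁ < β → fword (shift (ℓ-1) w) β ≤ 1 := by
    intro β hβ
    obtain ⟨β', hβ'A, hβ'lt⟩ := exists_lt_of_csInf_lt hAne hβ
    calc fword (shift (ℓ-1) w) β
        = ∑ i ∈ Finset.range n, ((shift (ℓ-1) w i : ℝ)) / β ^ (i+1) := hfeq _ β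
      _ ≤ ∑ i ∈ Finset.range n, ((shift (ℓ-1) w i : ℝ)) / β' ^ (i+1) :=
          sum_anti _ n hβ'A.1.le hβ'lt.le
      _ = fword (shift (ℓ-1) w) β' := (hfeq _ β').symm
      _ ≤ 1 := hβ'A.2
  -- Parry-type argument
  have key : ∀ β : ℝ, β₁ < β → ∀ j, fword (shift j w) β ≤ 1 := by
    intro β hβ
    have hβ1 : 1 < β := lt_of_le_of_lt hβ₁ge1 hβ
    have hβ0 : (0:ℝ) < β := by linarith
    obtain ⟨j₀, hj₀mem, hj₀max⟩ := Finset.exists_max_image (Finset.range n)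
      (fun j => fword (shift j w) β) ⟨0, Finset.mem_range.mpr (by omega)⟩
    have hFle : ∀ j, fword (shift j w) β ≤ fword (shift j₀ w) β := by
      intro j
      by_cases hj : j < n
      · exact hj₀max j (Finset.mem_range.mpr hj)
      · rw [hzero j (by omega)]
        exact hj₀max (n-1) (Finset.mem_range.mpr (by omega))
    have hFj₀ : fword (shift j₀ w) β ≤ 1 := by
      by_cases hcase : j₀ = ℓ - 1
      · rw [hcase]; exact hfu_le β hβ
      · obtain ⟨k, hagree, hklt⟩ := part1 j₀ hcase
        have hkn : k + (ℓ-1) < n - 1 := by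
          by_contra h
          push_neg at h
          have h2 : shift (ℓ-1) w k = 0 := hw0 _ (by omega)
          omega
        have hk1n : k + 1 < n := by omega
        have hBpos : (0:ℝ) < β ^ (k+1) := pow_pos hβ0 _
        have hB1 : (1:ℝ) < β ^ (k+1) := one_lt_pow₀ hβ1 (by omega)
        have e1 : fword (shift j₀ w) β
            = (∑ i ∈ Finset.range (k+1), ((shift j₀ w i : ℝ)) / β ^ (i+1))
            + ∑ i ∈ Finset.range (n-(k+1)), ((shift j₀ w ((k+1)+i) : ℝ)) / β ^ ((k+1)+i+1) := by
          have hsp := Finset.sum_range_add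
            (fun i => ((shift j₀ w i : ℝ)) / β ^ (i+1)) (k+1) (n-(k+1))
          rw [show (k+1) + (n-(k+1)) = n from by omega] at hsp
          rw [hfeq j₀ β, hsp]
        have e2 : ∑ i ∈ Finset.range (n-(k+1)), ((shift j₀ w ((k+1)+i) : ℝ)) / β ^ ((k+1)+i+1)
            = (1/β^(k+1)) * fword (shift (j₀+(k+1)) w) β := by
          have hsub : Finset.range (n-(k+1)) ⊆ Finset.range n :=
            Finset.range_subset_range.mpr (by omega)
          have hv : ∀ i ∈ Finset.range n, i ∉ Finset.range (n-(k+1)) →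
              (1/β^(k+1)) * ((shift (j₀+(k+1)) w i : ℝ)/β^(i+1)) = 0 := by
            intro i _ hni
            rw [Finset.mem_range, not_lt] at hni
            have hz : shift (j₀+(k+1)) w i = 0 := hw0 _ (by omega)
            rw [hz]
            simp
          rw [hfeq (j₀+(k+1)) β, Finset.mul_sum, ← Finset.sum_subset hsub hv]
          apply Finset.sum_congr rfl
          intro i hi
          have harg : shift j₀ w ((k+1)+i) = shift (j₀+(k+1)) w i := by
            show w ((k+1)+i+j₀) = w (i+(j₀+(k+1)))
            congr 1; omega
          rw [harg, show (k+1)+i+1 = (k+1)+(i+1) from by omega, pow_add,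
            div_eq_mul_inv, mul_inv, one_div]
          ring
        have e3 : ∑ i ∈ Finset.range (k+1), ((shift j₀ w i : ℝ)) / β ^ (i+1)
            ≤ (∑ i ∈ Finset.range (k+1), ((shift (ℓ-1) w i : ℝ)) / β ^ (i+1)) - 1/β^(k+1) := by
          rw [Finset.sum_range_succ, Finset.sum_range_succ]
          have h1 : ∑ i ∈ Finset.range k, ((shift j₀ w i : ℝ)) / β ^ (i+1)
              = ∑ i ∈ Finset.range k, ((shift (ℓ-1) w i : ℝ)) / β ^ (i+1) :=
            Finset.sum_congr rfl fun i hi => by rw [hagree i (Finset.mem_range.mp hi)]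
          rw [h1]
          have h2 : (shift j₀ w k : ℝ) ≤ (shift (ℓ-1) w k : ℝ) - 1 := by
            have h2a : shift j₀ w k + 1 ≤ shift (ℓ-1) w k := hklt
            have h2b := (Nat.cast_le (α := ℝ)).mpr h2a
            push_cast at h2b
            linarith
          have h3 : (shift j₀ w k : ℝ)/β^(k+1) ≤ ((shift (ℓ-1) w k : ℝ) - 1)/β^(k+1) := by
            gcongr
          rw [sub_div] at h3
          linarith
        have e4 : ∑ i ∈ Finset.range (k+1), ((shift (ℓ-1) w i : ℝ)) / β ^ (i+1) ≤ 1 := by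
          have h4 : ∑ i ∈ Finset.range (k+1), ((shift (ℓ-1) w i : ℝ)) / β ^ (i+1)
              ≤ ∑ i ∈ Finset.range n, ((shift (ℓ-1) w i : ℝ)) / β ^ (i+1) :=
            Finset.sum_le_sum_of_subset_of_nonneg (Finset.range_subset_range.mpr (by omega))
              (fun i _ _ => div_nonneg (Nat.cast_nonneg _) (pow_nonneg hβ0.le _))
          rw [← hfeq] at h4
          exact h4.trans (hfu_le β hβ)
        have e5 : fword (shift (j₀+(k+1)) w) β ≤ fword (shift j₀ w) β := hFle _
        by_contra hgt
        push_neg at hgt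
        have h5 : (1/β^(k+1)) * fword (shift (j₀+(k+1)) w) β
            ≤ (1/β^(k+1)) * fword (shift j₀ w) β :=
          mul_le_mul_of_nonneg_left e5 (by positivity)
        have hcomb : fword (shift j₀ w) β
            ≤ 1 - 1/β^(k+1) + (1/β^(k+1)) * fword (shift j₀ w) β := by
          have e1' := e1
          rw [e2] at e1'
          linarith
        have h6 : (fword (shift j₀ w) β - 1)/β^(k+1) < fword (shift j₀ w) β - 1 :=
          div_lt_self (by linarith) hB1
        have h7 : 1 - 1/β^(k+1) + (1/β^(k+1)) * fword (shift j₀ w) β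
            = 1 + (fword (shift j₀ w) β - 1)/β^(k+1) := by
          field_simp
          ring
        linarith
    intro j
    exact (hFle j).trans hFj₀
  -- all shifted Bhat values are ≤ β₁
  have hshift_le : ∀ j, Bhat (shift j w) ≤ β₁ := by
    intro j
    by_cases hz : shift j w = fun _ => 0
    · rw [Bhat, if_pos hz]; linarith
    · rw [Bhat, if_neg hz]
      by_contra hcon
      push_neg at hcon
      set c := sInf {β : ℝ | 1 < β ∧ fword (shift j w) β ≤ 1} with hcdef
      have hmem : (β₁+c)/2 ∈ {β : ℝ | 1 < β ∧ fword (shift j w) β ≤ 1} :=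
        ⟨by linarith, key _ (by linarith) j⟩
      have := csInf_le ⟨1, fun b hb => hb.1.le⟩ hmem
      rw [← hcdef] at this
      linarith
  have hbddw : BddAbove (Set.range fun j => Bhat (shift j w)) :=
    ⟨β₁, by rintro y ⟨j, rfl⟩; exact hshift_le j⟩
  have part2 : Bbar w = Bhat (shift (ℓ-1) w) := by
    rw [Bbar, hBhatu]
    apply le_antisymm
    · exact ciSup_le hshift_le
    · have h := le_ciSup hbddw (ℓ-1)
      rw [hBhatu] at h
      exact h
  refine ⟨part2, ?_⟩
  -- f_u(β₁) ≥ 1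
  have hk₀n : k₀ < n := by
    by_contra hknn
    push_neg at hknn
    have := hsz (ℓ-1) k₀ hknn
    omega
  have hfu_ge1 : (1:ℝ) ≤ fword (shift (ℓ-1) w) β₁ := by
    by_contra h
    push_neg at h
    rcases eq_or_lt_of_le hβ₁ge1 with heq | hgt
    · rw [← heq] at h
      have h1 : (1:ℝ) ≤ fword (shift (ℓ-1) w) 1 := by
        rw [hfeq (ℓ-1) 1]
        simp only [one_pow, div_one]
        have hsingle : ((shift (ℓ-1) w k₀ : ℝ))
            ≤ ∑ i ∈ Finset.range n, ((shift (ℓ-1) w i : ℝ)) :=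
          Finset.single_le_sum (f := fun i => ((shift (ℓ-1) w i : ℝ)))
            (fun i _ => Nat.cast_nonneg _) (Finset.mem_range.mpr hk₀n)
        have hc : (1:ℝ) ≤ (shift (ℓ-1) w k₀ : ℝ) := by exact_mod_cast hupos
        linarith
      linarith
    · have hcont : ContinuousAt
          (fun b : ℝ => ∑ i ∈ Finset.range n, ((shift (ℓ-1) w i : ℝ)) / b ^ (i+1)) β₁ :=
        continuousAt_sum_div _ _ (ne_of_gt hβ₁0)
      have hval : (∑ i ∈ Finset.range n, ((shift (ℓ-1) w i : ℝ)) / β₁ ^ (i+1)) < 1 := by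
        rw [← hfeq (ℓ-1) β₁]; exact h
      have hev : ∀ᶠ b in nhds β₁,
          (∑ i ∈ Finset.range n, ((shift (ℓ-1) w i : ℝ)) / b ^ (i+1)) < 1 :=
        hcont.eventually_lt_const hval
      have hev2 : ∀ᶠ b in nhds β₁, 1 < b := eventually_gt_nhds hgt
      have hev3 : ∀ᶠ b in nhdsWithin β₁ (Set.Iio β₁),
          (((∑ i ∈ Finset.range n, ((shift (ℓ-1) w i : ℝ)) / b ^ (i+1)) < 1 ∧ 1 < b)
            ∧ b ∈ Set.Iio β₁) :=
        (Filter.Eventually.filter_mono nhdsWithin_le_nhds (hev.and hev2)).and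
          self_mem_nhdsWithin
      haveI := nhdsLT_neBot β₁
      obtain ⟨b, hb1, hb2⟩ := hev3.exists
      have hmem : b ∈ {β : ℝ | 1 < β ∧ fword (shift (ℓ-1) w) β ≤ 1} :=
        ⟨hb1.2, by rw [hfeq (ℓ-1) b]; exact hb1.1.le⟩
      have hle := csInf_le hAbdd hmem
      have : b < β₁ := hb2
      linarith
  -- Part 3
  intro v hvw hvne hvagree
  obtain ⟨Mv, hMv⟩ := hvw
  have hex : ∃ i, v i ≠ w i := by
    by_contra h; push_neg at h; exact hvne (funext h)
  obtain ⟨i₀, hi₀⟩ := hex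
  have hi₀n : n - 1 ≤ i₀ := by
    by_contra h; push_neg at h; exact hi₀ (hvagree i₀ (by omega))
  have hvi₀ : 1 ≤ v i₀ := by
    have := hw0 i₀ hi₀n; omega
  set m : ℕ := i₀ - (ℓ - 1) with hmdef
  have hmi : m + (ℓ-1) = i₀ := by omega
  set N : ℕ := max n (m+1) with hNdef
  have huN : ∀ i, N ≤ i → shift (ℓ-1) w i = 0 :=
    fun i hi => hsz (ℓ-1) i (le_trans (le_max_left _ _) hi)
  have huv : ∀ i, shift (ℓ-1) w i ≤ shift (ℓ-1) v i := by
    intro i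
    show w (i + (ℓ-1)) ≤ v (i + (ℓ-1))
    by_cases h : i + (ℓ-1) < n - 1
    · rw [hvagree _ h]
    · rw [hw0 _ (by omega)]; exact Nat.zero_le _
  have hum : shift (ℓ-1) w m = 0 := hw0 _ (by omega)
  have hvm : 1 ≤ shift (ℓ-1) v m := by
    show 1 ≤ v (m + (ℓ-1))
    rw [hmi]
    exact hvi₀
  have hgβ₁ : 1 + 1/β₁^(m+1)
      ≤ ∑ i ∈ Finset.range N, ((shift (ℓ-1) v i : ℝ)) / β₁ ^ (i+1) := by
    have hstep : ∀ i ∈ Finset.range N,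
        ((shift (ℓ-1) w i : ℝ)) / β₁ ^ (i+1) + (if i = m then 1/β₁^(m+1) else 0)
          ≤ ((shift (ℓ-1) v i : ℝ)) / β₁ ^ (i+1) := by
      intro i _
      by_cases him : i = m
      · subst him
        rw [if_pos rfl, hum]
        have hc : (1:ℝ) ≤ (shift (ℓ-1) v m : ℝ) := by exact_mod_cast hvm
        rw [Nat.cast_zero, zero_div, zero_add]
        exact (div_le_div_iff_of_pos_right (pow_pos hβ₁0 _)).mpr hc
      · rw [if_neg him, add_zero]
        exact (div_le_div_iff_of_pos_right (pow_pos hβ₁0 _)).mpr (by exact_mod_cast huv i)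
    have hsum := Finset.sum_le_sum hstep
    rw [Finset.sum_add_distrib,
      Finset.sum_ite_eq' (Finset.range N) m (fun _ => 1/β₁^(m+1)),
      if_pos (Finset.mem_range.mpr (by omega))] at hsum
    have hufw : ∑ i ∈ Finset.range N, ((shift (ℓ-1) w i : ℝ)) / β₁ ^ (i+1)
        = fword (shift (ℓ-1) w) β₁ := (fword_eq_sum huN β₁).symm
    rw [hufw] at hsum
    linarith
  have hcontg : ContinuousAt
      (fun b : ℝ => ∑ i ∈ Finset.range N, ((shift (ℓ-1) v i : ℝ)) / b ^ (i+1)) β₁ :=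
    continuousAt_sum_div _ _ (ne_of_gt hβ₁0)
  have hgval : (1:ℝ) < ∑ i ∈ Finset.range N, ((shift (ℓ-1) v i : ℝ)) / β₁ ^ (i+1) := by
    have : (0:ℝ) < 1/β₁^(m+1) := by positivity
    linarith
  have hevg : ∀ᶠ b in nhds β₁,
      1 < ∑ i ∈ Finset.range N, ((shift (ℓ-1) v i : ℝ)) / b ^ (i+1) :=
    hcontg.eventually_const_lt hgval
  have hevg2 : ∀ᶠ b in nhdsWithin β₁ (Set.Ioi β₁),
      ((1 < ∑ i ∈ Finset.range N, ((shift (ℓ-1) v i : ℝ)) / b ^ (i+1)) ∧ b ∈ Set.Ioi β₁) :=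
    (Filter.Eventually.filter_mono nhdsWithin_le_nhds hevg).and self_mem_nhdsWithin
  haveI := nhdsGT_neBot β₁
  obtain ⟨β₀, hgβ₀, hβ₀mem⟩ := hevg2.exists
  have hβ₀gt : β₁ < β₀ := hβ₀mem
  have hMv' : ∀ i, shift (ℓ-1) v i ≤ Mv := fun i => hMv _
  have hv'ne : shift (ℓ-1) v ≠ fun _ => 0 := by
    intro h
    have h2 := congrFun h m
    try simp only at h2
    omega
  have hBv' : β₀ ≤ Bhat (shift (ℓ-1) v) := by
    rw [Bhat, if_neg hv'ne]
    apply le_csInf (setA_nonempty hMv')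
    intro b hb
    by_contra hcon
    push_neg at hcon
    have hb1 : 1 < b := hb.1
    have hle : ∑ i ∈ Finset.range N, ((shift (ℓ-1) v i : ℝ)) / β₀ ^ (i+1)
        ≤ ∑ i ∈ Finset.range N, ((shift (ℓ-1) v i : ℝ)) / b ^ (i+1) :=
      sum_anti _ N hb1.le hcon.le
    have hle2 : ∑ i ∈ Finset.range N, ((shift (ℓ-1) v i : ℝ)) / b ^ (i+1)
        ≤ fword (shift (ℓ-1) v) b :=
      Summable.sum_le_tsum _ (fun i _ => div_nonneg (Nat.cast_nonneg _) (pow_nonneg (by linarith) _))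
        (summable_aux hMv' hb1)
    linarith [hb.2]
  have hbddv : BddAbove (Set.range fun j => Bhat (shift j v)) := by
    refine ⟨(Mv:ℝ)+2, ?_⟩
    rintro y ⟨j, rfl⟩
    exact Bhat_le_of_bound (fun i => hMv _)
  have hfin : Bhat (shift (ℓ-1) v) ≤ Bbar v := le_ciSup hbddv (ℓ-1)
  rw [part2, hBhatu]
  linarith
end
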